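/- Let n ≥ 1, let U ⊆ ℝⁿ be open and let u : U → ℝ be a C³ function satisfying Δu = −1 on U. Then the Weinberger P-function P = |∇u|² + (2/n)·u satisfies ΔP = 2·‖Hess u + (1/n)·Iₙ‖_F² at every point of U; in particular ΔP ≥ 0, i.e. P is subharmonic on U. -/

import Mathlib

open scoped BigOperators

/-- Partial derivative `∂ᵢ v` of a scalar function on `ℝⁿ = Fin n → ℝ`. -/
noncomputable def pd {n : ℕ} (i : Fin n) (v : (Fin n → ℝ) → ℝ) (x : Fin n → ℝ) : ℝ :=
  fderiv ℝ v x (Pi.single i 1)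

/-- Gradient `∇v`. -/
noncomputable def grad {n : ℕ} (v : (Fin n → ℝ) → ℝ) (x : Fin n → ℝ) : Fin n → ℝ :=
  fun i => pd i v x

/-- Hessian matrix `(∂ᵢ∂ⱼ v)ᵢⱼ`. -/
noncomputable def hess {n : ℕ} (v : (Fin n → ℝ) → ℝ) (x : Fin n → ℝ) :
    Matrix (Fin n) (Fin n) ℝ :=
  fun i j => pd i (fun y => pd j v y) x

/-- Laplacian `Δv = tr (Hess v)`. -/
noncomputable def lap {n : ℕ} (v : (Fin n → ℝ) → ℝ) (x : Fin n → ℝ) : ℝ :=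
  ∑ i, hess v x i i

/-- Divergence of a vector field. -/
noncomputable def divg {n : ℕ} (X : (Fin n → ℝ) → (Fin n → ℝ)) (x : Fin n → ℝ) : ℝ :=
  ∑ i, pd i (fun y => X y i) x

/-- Euclidean inner product. -/
def dotp {n : ℕ} (a b : Fin n → ℝ) : ℝ := ∑ i, a i * b i

/-- Frobenius inner product of matrices. -/
def frobInner {n : ℕ} (A B : Matrix (Fin n) (Fin n) ℝ) : ℝ := ∑ i, ∑ j, A i j * B i j

/-- Squared Frobenius norm of a matrix. -/
def frobSq {n : ℕ} (A : Matrix (Fin n) (Fin n) ℝ) : ℝ := ∑ i, ∑ j, (A i j) ^ 2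

section Aux
variable {n : ℕ} {x : Fin n → ℝ} {U : Set (Fin n → ℝ)}

lemma pd_congrOn {i : Fin n} (f g : (Fin n → ℝ) → ℝ) (hU : IsOpen U) (hx : x ∈ U)
    (h : ∀ y ∈ U, f y = g y) : pd i f x = pd i g x := by
  unfold pd
  rw [Filter.EventuallyEq.fderiv_eq (Filter.eventuallyEq_of_mem (hU.mem_nhds hx) h)]

lemma pd_sum {i : Fin n} {ι : Type*} (s : Finset ι) (f : ι → (Fin n → ℝ) → ℝ)
    (hf : ∀ j ∈ s, DifferentiableAt ℝ (f j) x) :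
    pd i (fun y => ∑ j ∈ s, f j y) x = ∑ j ∈ s, pd i (f j) x := by
  unfold pd; rw [fderiv_fun_sum hf]; simp

lemma pd_mul {i : Fin n} {f g : (Fin n → ℝ) → ℝ} (hf : DifferentiableAt ℝ f x)
    (hg : DifferentiableAt ℝ g x) :
    pd i (fun y => f y * g y) x = pd i f x * g x + f x * pd i g x := by
  unfold pd; rw [fderiv_fun_mul hf hg]; simp; ring

lemma pd_add {i : Fin n} {f g : (Fin n → ℝ) → ℝ} (hf : DifferentiableAt ℝ f x)
    (hg : DifferentiableAt ℝ g x) :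
    pd i (fun y => f y + g y) x = pd i f x + pd i g x := by
  unfold pd; rw [fderiv_fun_add hf hg]; simp

lemma pd_const_mul {i : Fin n} {f : (Fin n → ℝ) → ℝ} (c : ℝ) (hf : DifferentiableAt ℝ f x) :
    pd i (fun y => c * f y) x = c * pd i f x := by
  unfold pd; rw [fderiv_const_mul hf c]; simp

lemma pd_const {i : Fin n} (c : ℝ) : pd i (fun _ => c) x = 0 := by
  unfold pd; simp

lemma contDiffOn_pd {m : ℕ∞} {j : Fin n} {v : (Fin n → ℝ) → ℝ} (hU : IsOpen U)
    (hv : ContDiffOn ℝ (m + 1) v U) : ContDiffOn ℝ m (fun y => pd j v y) U := by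
  have h1 : ContDiffOn ℝ m (fderiv ℝ v) U := hv.fderiv_of_isOpen hU le_rfl
  exact h1.clm_apply contDiffOn_const

lemma diffAt_of_contDiffOn {v : (Fin n → ℝ) → ℝ} (hU : IsOpen U) (hx : x ∈ U)
    (hv : ContDiffOn ℝ 1 v U) : DifferentiableAt ℝ v x :=
  (hv.contDiffAt (hU.mem_nhds hx)).differentiableAt one_ne_zero

lemma pd_comm {i j : Fin n} {v : (Fin n → ℝ) → ℝ} (hv : ContDiffAt ℝ 2 v x) :
    pd i (fun y => pd j v y) x = pd j (fun y => pd i v y) x := by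
  have hsymm : IsSymmSndFDerivAt ℝ v x := hv.isSymmSndFDerivAt (by simp)
  have hd : DifferentiableAt ℝ (fderiv ℝ v) x := by
    have := hv.fderiv_right (m := 1) le_rfl
    exact this.differentiableAt one_ne_zero
  have key : ∀ a b : Fin n → ℝ,
      fderiv ℝ (fun y => fderiv ℝ v y b) x a = fderiv ℝ (fderiv ℝ v) x a b := by
    intro a b
    rw [fderiv_clm_apply hd (differentiableAt_const b)]
    simp
  unfold pd
  rw [key, key, hsymm]

lemma frobSq_add_smul_one (A : Matrix (Fin n) (Fin n) ℝ) (t : ℝ) :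
    frobSq (A + t • (1 : Matrix (Fin n) (Fin n) ℝ))
      = frobSq A + 2 * t * (∑ i, A i i) + n * t ^ 2 := by
  have h : ∀ i j : Fin n, ((A + t • (1 : Matrix (Fin n) (Fin n) ℝ)) i j) ^ 2
      = A i j ^ 2 + (if i = j then 2 * t * A i j + t ^ 2 else 0) := by
    intro i j
    by_cases hij : i = j
    · subst hij
      have e : (A + t • (1 : Matrix (Fin n) (Fin n) ℝ)) i i = A i i + t := by
        simp [Matrix.add_apply, Matrix.one_apply]
      rw [e, if_pos rfl]; ring
    · have e : (A + t • (1 : Matrix (Fin n) (Fin n) ℝ)) i j = A i j := by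
        simp [Matrix.add_apply, Matrix.one_apply, hij]
      rw [e, if_neg hij]
      ring
  have h2 : ∀ i : Fin n, ∑ j, ((A + t • (1 : Matrix (Fin n) (Fin n) ℝ)) i j) ^ 2
      = (∑ j, A i j ^ 2) + (2 * t * A i i + t ^ 2) := by
    intro i
    rw [Finset.sum_congr rfl fun j _ => h i j, Finset.sum_add_distrib, Finset.sum_ite_eq]
    simp
  unfold frobSq
  rw [Finset.sum_congr rfl fun i _ => h2 i, Finset.sum_add_distrib, Finset.sum_add_distrib,
    Finset.sum_const, Finset.card_univ, Fintype.card_fin, nsmul_eq_mul, ← Finset.mul_sum]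
  ring

end Aux

theorem stmt2 {n : ℕ} (hn : 1 ≤ n) {U : Set (Fin n → ℝ)} (hU : IsOpen U)
    (u : (Fin n → ℝ) → ℝ) (hu : ContDiffOn ℝ 3 u U)
    (heq : ∀ x ∈ U, lap u x = -1)
    (P : (Fin n → ℝ) → ℝ)
    (hP : ∀ y, P y = dotp (grad u y) (grad u y) + (2 / (n : ℝ)) * u y) :
    ∀ x ∈ U,
      lap P x = 2 * frobSq (hess u x + (1 / (n : ℝ)) • (1 : Matrix (Fin n) (Fin n) ℝ))
      ∧ 0 ≤ lap P x := by
  intro x hx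
  have hn0 : (n : ℝ) ≠ 0 := Nat.cast_ne_zero.mpr (by omega)
  set c : ℝ := 2 / (n : ℝ) with hc
  -- regularity
  have hu2 : ContDiffOn ℝ 2 u U := hu.of_le (by norm_num)
  have hD : ∀ j : Fin n, ContDiffOn ℝ 2 (fun y => pd j u y) U := fun j =>
    contDiffOn_pd (m := 2) hU (hu.of_le (by norm_num))
  have hH : ∀ i j : Fin n, ContDiffOn ℝ 1 (fun y => pd i (fun z => pd j u z) y) U :=
    fun i j => contDiffOn_pd (m := 1) hU ((hD j).of_le (by norm_num))
  have dD : ∀ (j : Fin n) (y : Fin n → ℝ), y ∈ U →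
      DifferentiableAt ℝ (fun z => pd j u z) y :=
    fun j y hy => diffAt_of_contDiffOn hU hy ((hD j).of_le one_le_two)
  have dH : ∀ (i j : Fin n) (y : Fin n → ℝ), y ∈ U →
      DifferentiableAt ℝ (fun z => pd i (fun w => pd j u w) z) y :=
    fun i j y hy => diffAt_of_contDiffOn hU hy (hH i j)
  have du : ∀ y ∈ U, DifferentiableAt ℝ u y := fun y hy =>
    diffAt_of_contDiffOn hU hy (hu.of_le (by norm_num))
  -- P as explicit function
  have hPfun : P = fun y => (∑ j, pd j u y * pd j u y) + c * u y := by
    funext y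
    rw [hP y]
    simp [dotp, grad, hc]
  -- first derivatives of P on U
  have step1 : ∀ (i : Fin n) (y : Fin n → ℝ), y ∈ U →
      pd i P y = (∑ j, 2 * (pd j u y * pd i (fun z => pd j u z) y)) + c * pd i u y := by
    intro i y hy
    rw [hPfun]
    have hsum : DifferentiableAt ℝ (fun z => ∑ j, pd j u z * pd j u z) y :=
      DifferentiableAt.fun_sum fun j _ => (dD j y hy).mul (dD j y hy)
    have hcu : DifferentiableAt ℝ (fun z => c * u z) y := (du y hy).const_mul c
    rw [pd_add (f := fun z => ∑ j, pd j u z * pd j u z) (g := fun z => c * u z) hsum hcu,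
      pd_sum Finset.univ (fun j z => pd j u z * pd j u z)
        (fun j _ => (dD j y hy).mul (dD j y hy)),
      pd_const_mul c (du y hy)]
    congr 1
    refine Finset.sum_congr rfl fun j _ => ?_
    rw [pd_mul (dD j y hy) (dD j y hy)]
    ring
  -- second derivatives of P at x
  have step2 : ∀ i : Fin n,
      pd i (fun y => pd i P y) x
        = (∑ j, 2 * ((pd i (fun z => pd j u z) x) ^ 2
            + pd j u x * pd i (fun z => pd i (fun w => pd j u w) z) x))
          + c * pd i (fun z => pd i u z) x := by
    intro i
    rw [pd_congrOn (fun y => pd i P y)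
      (fun y => (∑ j, 2 * (pd j u y * pd i (fun z => pd j u z) y)) + c * pd i u y)
      hU hx (step1 i)]
    have hsum : DifferentiableAt ℝ
        (fun y => ∑ j, 2 * (pd j u y * pd i (fun z => pd j u z) y)) x :=
      DifferentiableAt.fun_sum fun j _ => (((dD j x hx).mul (dH i j x hx)).const_mul 2)
    have hcu : DifferentiableAt ℝ (fun y => c * pd i u y) x := (dD i x hx).const_mul c
    rw [pd_add (f := fun y => ∑ j, 2 * (pd j u y * pd i (fun z => pd j u z) y))
        (g := fun y => c * pd i u y) hsum hcu,
      pd_sum Finset.univ (fun j y => 2 * (pd j u y * pd i (fun z => pd j u z) y))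
        (fun j _ => ((dD j x hx).mul (dH i j x hx)).const_mul 2),
      pd_const_mul c (dD i x hx)]
    congr 1
    refine Finset.sum_congr rfl fun j _ => ?_
    rw [pd_const_mul 2 ((dD j x hx).fun_mul (dH i j x hx)),
      pd_mul (dD j x hx) (dH i j x hx)]
    ring
  -- third derivative sums vanish
  have step3 : ∀ j : Fin n,
      ∑ i, pd i (fun z => pd i (fun w => pd j u w) z) x = 0 := by
    intro j
    have comm1 : ∀ i : Fin n, pd i (fun z => pd i (fun w => pd j u w) z) x
        = pd j (fun z => pd i (fun w => pd i u w) z) x := by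
      intro i
      have e1 : pd i (fun z => pd i (fun w => pd j u w) z) x
          = pd i (fun z => pd j (fun w => pd i u w) z) x :=
        pd_congrOn _ _ hU hx fun y hy =>
          pd_comm (hu2.contDiffAt (hU.mem_nhds hy))
      have e2 : pd i (fun z => pd j (fun w => pd i u w) z) x
          = pd j (fun z => pd i (fun w => pd i u w) z) x :=
        pd_comm ((hD i).contDiffAt (hU.mem_nhds hx))
      rw [e1, e2]
    calc ∑ i, pd i (fun z => pd i (fun w => pd j u w) z) x
        = ∑ i, pd j (fun z => pd i (fun w => pd i u w) z) x :=
          Finset.sum_congr rfl fun i _ => comm1 i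
      _ = pd j (fun z => ∑ i, pd i (fun w => pd i u w) z) x :=
          (pd_sum Finset.univ (fun i z => pd i (fun w => pd i u w) z)
            (fun i _ => dH i i x hx)).symm
      _ = pd j (fun _ => (-1 : ℝ)) x := by
          refine pd_congrOn _ _ hU hx fun y hy => ?_
          have := heq y hy
          simpa [lap, hess] using this
      _ = 0 := pd_const _
  -- assemble the Laplacian of P
  have hlapP : lap P x = 2 * frobSq (hess u x) - c := by
    have : lap P x = ∑ i, pd i (fun y => pd i P y) x := rfl
    rw [this]
    rw [Finset.sum_congr rfl fun i _ => step2 i]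
    rw [Finset.sum_add_distrib]
    have htr : ∑ i, c * pd i (fun z => pd i u z) x = c * lap u x := by
      rw [← Finset.mul_sum]; rfl
    rw [htr, heq x hx]
    have hmid : ∑ i, ∑ j, 2 * ((pd i (fun z => pd j u z) x) ^ 2
          + pd j u x * pd i (fun z => pd i (fun w => pd j u w) z) x)
        = 2 * frobSq (hess u x)
          + 2 * ∑ j, pd j u x * ∑ i, pd i (fun z => pd i (fun w => pd j u w) z) x := by
      simp_rw [mul_add, Finset.sum_add_distrib]
      congr 1
      · rw [frobSq, Finset.mul_sum]
        refine Finset.sum_congr rfl fun i _ => ?_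
        rw [Finset.mul_sum]
        rfl
      · rw [Finset.sum_comm, Finset.mul_sum]
        refine Finset.sum_congr rfl fun j _ => ?_
        rw [Finset.mul_sum, Finset.mul_sum]
    rw [hmid]
    have : ∑ j, pd j u x * ∑ i, pd i (fun z => pd i (fun w => pd j u w) z) x = 0 := by
      refine Finset.sum_eq_zero fun j _ => ?_
      rw [step3 j, mul_zero]
    rw [this]
    ring
  have htrace : ∑ i, hess u x i i = -1 := heq x hx
  have hkey : lap P x
      = 2 * frobSq (hess u x + (1 / (n : ℝ)) • (1 : Matrix (Fin n) (Fin n) ℝ)) := by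
    rw [hlapP, frobSq_add_smul_one (hess u x) (1 / (n : ℝ)), htrace, hc]
    field_simp
    ring
  refine ⟨hkey, ?_⟩
  rw [hkey]
  have : 0 ≤ frobSq (hess u x + (1 / (n : ℝ)) • (1 : Matrix (Fin n) (Fin n) ℝ)) := by
    unfold frobSq
    positivity
  linarith
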